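/- Let δ be a signpost sequence. (a) If δ(1) > 0, there exists a two-dimensional instance T_δ = (P, J, φ) with P strictly positive, column marginals φ_f = φ_m, a fair share F, and a unique δ-biproportional solution x, such that the fraction of rows i for which the rounded fair share is violated (i.e., x_{it} ∉ [⌊F_{it}⌋, ⌈F_{it}⌉] for some type t) is at least 1/(1 + ⌈δ(1)^{−2} + 1⌉). (b) If δ(1) = 0, there exists such an instance with three rows, column marginals φ_f = φ_m, and the fraction of violating rows at least 1/3. -/

import Mathlib

open Finset

/-- A signpost sequence: `γ 0 = 0`, `γ n ∈ [n-1, n]` for `n ≥ 1`, and the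
disjunction property. -/
def Signpost (γ : ℕ → ℝ) : Prop :=
  γ 0 = 0 ∧
  (∀ n : ℕ, 1 ≤ n → ((n : ℝ) - 1 ≤ γ n ∧ γ n ≤ n)) ∧
  ((∃ k : ℕ, 2 ≤ k ∧ γ k = (k : ℝ) - 1) → ∀ l : ℕ, 1 ≤ l → γ l < l) ∧
  ((∃ k : ℕ, 1 ≤ k ∧ γ k = (k : ℝ)) → ∀ l : ℕ, 2 ≤ l → (l : ℝ) - 1 < γ l)

/-- The rounding rule `R_γ` of a signpost sequence, as a set-valued map:
`R_γ(0) = {0}`, `R_γ(t) = {n}` for `t ∈ (γ n, γ (n+1))`, and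
`R_γ(t) = {n-1, n}` when `t = γ n > 0`. -/
def roundSet (γ : ℕ → ℝ) (t : ℝ) : Set ℕ :=
  {k | (t = 0 ∧ k = 0) ∨ (γ k < t ∧ t < γ (k + 1)) ∨ (0 < t ∧ (t = γ k ∨ t = γ (k + 1)))}

/-- The divisor method solution set `A_γ(Q, h)`. -/
def divisorSet (γ : ℕ → ℝ) {n : ℕ} (Q : Fin n → ℝ) (h : ℕ) : Set (Fin n → ℕ) :=
  {S | (∑ i, S i) = h ∧ ∃ lam : ℝ, 0 < lam ∧ ∀ i, S i ∈ roundSet γ (Q i / lam)}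

/-- The two candidate types. -/
inductive MType
  | f | m
deriving DecidableEq

instance instFintypeMType : Fintype MType where
  elems := {MType.f, MType.m}
  complete := by intro x; cases x <;> simp

/-- The other type. -/
def MType.other : MType → MType
  | .f => .m
  | .m => .f

/-- An instance of the apportionment problem with type parity: a finite candidate
set `C`, a party map, a (nonnegative real) vote map, a type map, a house size
`h ≥ 1` and a total order (the field `ord`) refining the votes. -/
structure TypedInstance (n : ℕ) (C : Type) [Fintype C] [DecidableEq C] where
  ord : LinearOrder C
  party : C → Fin n
  votes : C → ℝ
  votes_nonneg : ∀ c, 0 ≤ votes c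
  mtype : C → MType
  h : ℕ
  h_pos : 1 ≤ h
  refines : ∀ c c' : C, votes c' < votes c → ord.lt c' c

namespace TypedInstance

variable {n : ℕ} {C : Type} [Fintype C] [DecidableEq C]

/-- The candidates of party `i`. -/
def Ci (I : TypedInstance n C) (i : Fin n) : Finset C :=
  univ.filter fun c => I.party c = i

/-- The candidates of type `t`. -/
def Ct (I : TypedInstance n C) (t : MType) : Finset C :=
  univ.filter fun c => I.mtype c = t

/-- The candidates of party `i` and type `t`. -/
def Cit (I : TypedInstance n C) (i : Fin n) (t : MType) : Finset C :=
  univ.filter fun c => I.party c = i ∧ I.mtype c = t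

/-- The party vote totals `Q(I)`. -/
def Q (I : TypedInstance n C) : Fin n → ℝ := fun i => ∑ c ∈ I.Ci i, I.votes c

/-- The party × type vote totals `P(I)`. -/
def P (I : TypedInstance n C) : Fin n → MType → ℝ := fun i t => ∑ c ∈ I.Cit i t, I.votes c

/-- The supply matrix `S(I)`. -/
def S (I : TypedInstance n C) : Fin n → MType → ℕ := fun i t => (I.Cit i t).card

/-- The supply condition: `|C_i^t| ≥ ⌈h/2⌉` for every party `i` and type `t`. -/
def SupplyCond (I : TypedInstance n C) : Prop :=
  ∀ (i : Fin n) (t : MType), (I.h + 1) / 2 ≤ (I.Cit i t).card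

/-- Type parity condition (A): the numbers of elected candidates of the two types
differ by exactly `h mod 2`. Allocations are represented by the finset of elected
candidates. -/
def CondA (I : TypedInstance n C) (E : Finset C) : Prop :=
  (((E.filter fun c => I.mtype c = MType.f).card : ℤ) -
    ((E.filter fun c => I.mtype c = MType.m).card : ℤ)).natAbs = I.h % 2

instance (I : TypedInstance n C) (E : Finset C) : Decidable (I.CondA E) := by
  unfold CondA; infer_instance

/-- The number of elected candidates of each party. -/
def partyCount (I : TypedInstance n C) (E : Finset C) : Fin n → ℕ :=
  fun i => (E.filter fun c => I.party c = i).card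

/-- The number of elected candidates of each type. -/
def typeCount (I : TypedInstance n C) (E : Finset C) : MType → ℕ :=
  fun t => (E.filter fun c => I.mtype c = t).card

/-- Party proportionality condition (B) w.r.t. a signpost sequence `γ`. -/
def CondB (I : TypedInstance n C) (γ : ℕ → ℝ) (E : Finset C) : Prop :=
  ∃ J ∈ divisorSet γ I.Q I.h, ∀ i, I.partyCount E i = J i

/-- The set `X(I, γ)` of feasible allocations. -/
def X (I : TypedInstance n C) (γ : ℕ → ℝ) : Set (Finset C) :=
  {E | I.CondA E ∧ I.CondB γ E}

/-- The polytope `Z(I, J, γ)` of fractional allocations. -/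
def Z (I : TypedInstance n C) (J : Fin n → ℕ) : Set (Fin n → MType → ℝ) :=
  {y | (∀ t : MType, ((I.h / 2 : ℕ) : ℝ) ≤ ∑ i, y i t) ∧
       (∀ i : Fin n, y i MType.f + y i MType.m = (J i : ℝ)) ∧
       (∀ (i : Fin n) (t : MType), 0 ≤ y i t ∧ y i t ≤ ((I.Cit i t).card : ℝ))}

/-- The scaled instance `αI` (same candidate order). -/
def scale (I : TypedInstance n C) (α : ℝ) (hα : 0 < α) : TypedInstance n C where
  ord := I.ord
  party := I.party
  votes := fun c => α * I.votes c
  votes_nonneg := fun c => mul_nonneg hα.le (I.votes_nonneg c)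
  mtype := I.mtype
  h := I.h
  h_pos := I.h_pos
  refines := fun c c' hlt => I.refines c c' (by nlinarith [hlt, hα])

/-- `G` is a voting increment of `I` in candidate `c`: identical to `I` except
that `c` garners strictly more votes. -/
def VotingIncrement (I G : TypedInstance n C) (c : C) : Prop :=
  G.party = I.party ∧ G.mtype = I.mtype ∧ G.h = I.h ∧
  I.votes c < G.votes c ∧ ∀ c' : C, c' ≠ c → G.votes c' = I.votes c'

/-- The rank of a candidate in the order `≻`: position `1` is the top candidate. -/
def rank (I : TypedInstance n C) (c : C) : ℕ :=
  letI := I.ord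
  (univ.filter fun c' => c ≤ c').card

/-- The top `k` candidates of a subset `D` according to the order of `I`. -/
def topOf (I : TypedInstance n C) (D : Finset C) (k : ℕ) : Finset C :=
  letI := I.ord
  D.filter fun c => (D.filter fun c' => c ≤ c').card ≤ k

/-- The type-oblivious solution `T_J`: in every party `i`, the top `J i`
candidates of `C_i` are elected. -/
def oblivious (I : TypedInstance n C) (J : Fin n → ℕ) : Finset C :=
  univ.filter fun c => c ∈ I.topOf (I.Ci (I.party c)) (J (I.party c))

/-- The over-represented type of an allocation (type `f` in case of a tie). -/
def overType (I : TypedInstance n C) (E : Finset C) : MType :=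
  if I.typeCount E MType.m ≤ I.typeCount E MType.f then MType.f else MType.m

/-- One parity-correction swap: the worst-ranked elected candidate of the
over-represented type is replaced by the best-ranked unelected candidate of the
same party and of the under-represented type (if any; otherwise nothing happens). -/
def swapStep (I : TypedInstance n C) (E : Finset C) : Finset C :=
  letI := I.ord
  let t := I.overType E
  let elected := E.filter fun c => I.mtype c = t
  if hE : elected.Nonempty then
    let s := elected.min' hE
    let pool := univ.filter fun c => c ∉ E ∧ I.party c = I.party s ∧ I.mtype c = t.other
    if hp : pool.Nonempty then insert (pool.max' hp) (E.erase s) else E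
  else E

/-- The parity-correction loop (with fuel). -/
def greedyAux (I : TypedInstance n C) : ℕ → Finset C → Finset C
  | 0, E => E
  | k + 1, E => if I.CondA E then E else greedyAux I k (I.swapStep E)

/-- The output `E_J` of the greedy & parity correction algorithm. -/
def greedy (I : TypedInstance n C) (J : Fin n → ℕ) : Finset C :=
  greedyAux I I.h (I.oblivious J)

/-- The greedy & parity correction mechanism `M^G`. -/
def MG (I : TypedInstance n C) (γ : ℕ → ℝ) : Set (Finset C) :=
  {E | ∃ J ∈ divisorSet γ I.Q I.h, E = I.greedy J}

/-- Two allocations agree on all candidates of rank at most `l`. -/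
def agreeUpTo (I : TypedInstance n C) (E₁ E₂ : Finset C) (l : ℕ) : Prop :=
  ∀ c : C, I.rank c ≤ l → (c ∈ E₁ ↔ c ∈ E₂)

instance (I : TypedInstance n C) (E₁ E₂ : Finset C) (l : ℕ) :
    Decidable (I.agreeUpTo E₁ E₂ l) := by
  unfold agreeUpTo; infer_instance

/-- The length of the common prefix of two allocations (w.r.t. the ranking). -/
def prefixLen (I : TypedInstance n C) (E₁ E₂ : Finset C) : ℕ :=
  ((Finset.range (Fintype.card C + 1)).filter fun l => I.agreeUpTo E₁ E₂ l).sup id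

/-- The vote-leading type (type `f` in case of a tie; this tie-breaking rule is
scaling invariant). -/
noncomputable def voteLeading (I : TypedInstance n C) : MType :=
  if (∑ c ∈ I.Ct MType.f, I.votes c) < (∑ c ∈ I.Ct MType.m, I.votes c) then MType.m
  else MType.f

/-- The parity marginal `φ(I)`: for even `h` both types get `h/2`; for odd `h` the
vote-leading type gets `⌈h/2⌉`. -/
noncomputable def parityMarginal (I : TypedInstance n C) : MType → ℕ :=
  fun t => if t = I.voteLeading then (I.h + 1) / 2 else I.h / 2

end TypedInstance

/-- `(x, lam, mu)` is a `δ`-biproportional solution of the two-dimensional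
instance with supply `(P, S, J, φ)`. -/
def IsBipropSol (δ : ℕ → ℝ) {n : ℕ} (P : Fin n → MType → ℝ) (S : Fin n → MType → ℕ)
    (J : Fin n → ℕ) (φ : MType → ℕ) (x : Fin n → MType → ℕ)
    (lam : Fin n → ℝ) (mu : MType → ℝ) : Prop :=
  (∀ i, 0 < lam i) ∧ (∀ t, 0 < mu t) ∧
  (∀ (i : Fin n) (t : MType), x i t < S i t → x i t ∈ roundSet δ (P i t * lam i * mu t)) ∧
  (∀ i : Fin n, x i MType.f + x i MType.m = J i) ∧
  (∀ t : MType, (∑ i, x i t) = φ t) ∧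
  (∀ (i : Fin n) (t : MType), x i t ≤ S i t)

/-- The set `B_δ(P, S, J, φ)` of `δ`-biproportional solutions. -/
def bipropSet (δ : ℕ → ℝ) {n : ℕ} (P : Fin n → MType → ℝ) (S : Fin n → MType → ℕ)
    (J : Fin n → ℕ) (φ : MType → ℕ) : Set (Fin n → MType → ℕ) :=
  {x | ∃ lam mu, IsBipropSol δ P S J φ x lam mu}

/-- `δ`-biproportional solutions of a two-dimensional instance `(P, J, φ)`
without supply bounds. -/
def IsBipropSolNS (δ : ℕ → ℝ) {n : ℕ} (P : Fin n → MType → ℝ)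
    (J : Fin n → ℕ) (φ : MType → ℕ) (x : Fin n → MType → ℕ)
    (lam : Fin n → ℝ) (mu : MType → ℝ) : Prop :=
  (∀ i, 0 < lam i) ∧ (∀ t, 0 < mu t) ∧
  (∀ (i : Fin n) (t : MType), x i t ∈ roundSet δ (P i t * lam i * mu t)) ∧
  (∀ i : Fin n, x i MType.f + x i MType.m = J i) ∧
  (∀ t : MType, (∑ i, x i t) = φ t)

/-- The set `B_δ(P, J, φ)` for instances without supply bounds. -/
def bipropSetNS (δ : ℕ → ℝ) {n : ℕ} (P : Fin n → MType → ℝ)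
    (J : Fin n → ℕ) (φ : MType → ℕ) : Set (Fin n → MType → ℕ) :=
  {x | ∃ lam mu, IsBipropSolNS δ P J φ x lam mu}

/-- `F` is a fair share (matrix scaling) of the two-dimensional instance
`(P, J, φ)`. -/
def IsFairShare {n : ℕ} (P : Fin n → MType → ℝ) (J : Fin n → ℕ) (φ : MType → ℕ)
    (F : Fin n → MType → ℝ) : Prop :=
  ∃ (lam : Fin n → ℝ) (mu : MType → ℝ),
    (∀ i, 0 < lam i) ∧ (∀ t, 0 < mu t) ∧ (∀ i t, 0 < F i t) ∧
    (∀ (i : Fin n) (t : MType), F i t = P i t * lam i * mu t) ∧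
    (∀ i : Fin n, F i MType.f + F i MType.m = (J i : ℝ)) ∧
    (∀ t : MType, (∑ i, F i t) = (φ t : ℝ))

namespace TypedInstance

variable {n : ℕ} {C : Type} [Fintype C] [DecidableEq C]

/-- The allocation `E_x` electing, for every party `i` and type `t`, the top
`x i t` candidates of `C_i^t`. -/
def allocOf (I : TypedInstance n C) (x : Fin n → MType → ℕ) : Finset C :=
  univ.filter fun c =>
    c ∈ I.topOf (I.Cit (I.party c) (I.mtype c)) (x (I.party c) (I.mtype c))

/-- The `δ`-biproportional parity mechanism `M^B_δ`. -/
def MB (I : TypedInstance n C) (δ γ : ℕ → ℝ) : Set (Finset C) :=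
  {E | ∃ J ∈ divisorSet γ I.Q I.h,
        ∃ x ∈ bipropSet δ I.P I.S J I.parityMarginal, E = I.allocOf x}

end TypedInstance

section Stmt18Aux
variable {δ : ℕ → ℝ}

lemma sp_lb (h : Signpost δ) {n : ℕ} (hn : 1 ≤ n) : (n : ℝ) - 1 ≤ δ n := (h.2.1 n hn).1
lemma sp_ub (h : Signpost δ) {n : ℕ} (hn : 1 ≤ n) : δ n ≤ n := (h.2.1 n hn).2

lemma sp_nonneg (h : Signpost δ) (n : ℕ) : 0 ≤ δ n := by
  cases n with
  | zero => rw [h.1]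
  | succ k =>
    have h1 := sp_lb h (Nat.succ_le_succ (Nat.zero_le k))
    have h2 : (0:ℝ) ≤ ((k+1 : ℕ) : ℝ) - 1 := by push_cast; linarith
    linarith

lemma sp_mono (h : Signpost δ) {j l : ℕ} (hjl : j ≤ l) : δ j ≤ δ l := by
  rcases Nat.eq_or_lt_of_le hjl with rfl | hlt
  · exact le_rfl
  · cases j with
    | zero => rw [h.1]; exact sp_nonneg h l
    | succ k =>
      have h1 : δ (k+1) ≤ ((k+1 : ℕ) : ℝ) := sp_ub h (Nat.succ_le_succ (Nat.zero_le k))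
      have h2 : ((l : ℝ)) - 1 ≤ δ l := sp_lb h (by omega)
      have hn : k + 2 ≤ l := hlt
      have h3 : ((k:ℝ) + 2) ≤ (l:ℝ) := by exact_mod_cast hn
      push_cast at h1
      linarith

lemma sp_pos (h : Signpost δ) {n : ℕ} (hn : 2 ≤ n) : 0 < δ n := by
  have h1 := sp_lb h (by omega : 1 ≤ n)
  have h2 : (2:ℝ) ≤ (n:ℝ) := by exact_mod_cast hn
  linarith

lemma roundSet_bounds (h : Signpost δ) {t : ℝ} {k : ℕ} (ht : 0 < t)
    (hk : k ∈ roundSet δ t) : δ k ≤ t ∧ t ≤ δ (k+1) := by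
  simp only [roundSet, Set.mem_setOf_eq] at hk
  rcases hk with ⟨h0, -⟩ | ⟨ha, hb⟩ | ⟨-, he | he⟩
  · exact absurd h0 (ne_of_gt ht)
  · exact ⟨le_of_lt ha, le_of_lt hb⟩
  · exact ⟨le_of_eq he.symm, he ▸ sp_mono h (Nat.le_succ k)⟩
  · exact ⟨he ▸ sp_mono h (Nat.le_succ k), le_of_eq he⟩

lemma mem_roundSet_interior {t : ℝ} {k : ℕ} (h1 : δ k < t) (h2 : t < δ (k+1)) :
    k ∈ roundSet δ t := Or.inr (Or.inl ⟨h1, h2⟩)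

lemma mem_roundSet_left {t : ℝ} {k : ℕ} (ht : 0 < t) (he : t = δ k) :
    k ∈ roundSet δ t := Or.inr (Or.inr ⟨ht, Or.inl he⟩)


/-- Data for part (a). -/
noncomputable def stA_P (m : ℕ) : Fin (m+1) → MType → ℝ := fun i t =>
  if i = 0 then (if t = MType.f then 1 else 3*(m:ℝ) - 1)
  else (if t = MType.f then 3 - (m:ℝ)⁻¹ else (m:ℝ)⁻¹)

def stA_J (m : ℕ) : Fin (m+1) → ℕ := fun i => if i = 0 then 3*m else 3

def stA_x (m : ℕ) : Fin (m+1) → MType → ℕ := fun i t =>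
  if i = 0 then (if t = MType.f then 0 else 3*m) else (if t = MType.f then 3 else 0)

set_option maxHeartbeats 2000000 in
lemma stmt18_partA (δ : ℕ → ℝ) (hδ : Signpost δ) (hδ1 : 0 < δ 1) :
      ∃ (n : ℕ) (P : Fin n → MType → ℝ) (J : Fin n → ℕ) (φ : MType → ℕ)
        (F : Fin n → MType → ℝ) (x : Fin n → MType → ℕ),
        0 < n ∧ (∀ i t, 0 < P i t) ∧ ((∑ i, J i) = φ MType.f + φ MType.m) ∧
        φ MType.f = φ MType.m ∧ IsFairShare P J φ F ∧
        bipropSetNS δ P J φ = {x} ∧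
        (1 : ℝ) / (1 + (⌈(δ 1)⁻¹ ^ 2 + 1⌉₊ : ℝ)) ≤
          ((univ.filter fun i : Fin n =>
              ∃ t : MType, ¬(⌊F i t⌋ ≤ (x i t : ℤ) ∧ (x i t : ℤ) ≤ ⌈F i t⌉)).card : ℝ) / n := by
  set m : ℕ := ⌈(δ 1)⁻¹ ^ 2 + 1⌉₊ with hmdef
  have hs1 : δ 1 ≤ 1 := by have := sp_ub hδ (le_refl 1); push_cast at this; linarith
  have hm2 : 2 ≤ m := by
    have h1 : (1:ℝ) < (δ 1)⁻¹ ^ 2 + 1 := by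
      have : 0 < (δ 1)⁻¹ ^ 2 := by positivity
      linarith
    have := Nat.lt_ceil.mpr (by exact_mod_cast h1 : ((1:ℕ):ℝ) < (δ 1)⁻¹ ^ 2 + 1)
    omega
  have hmR : ((δ 1)⁻¹ ^ 2 + 1) ≤ (m:ℝ) := Nat.le_ceil _
  have hm2R : (2:ℝ) ≤ (m:ℝ) := by exact_mod_cast hm2
  have hmpos : (0:ℝ) < m := by linarith
  have hm0 : (m:ℝ) ≠ 0 := ne_of_gt hmpos
  have h3m1 : (0:ℝ) < 3*(m:ℝ) - 1 := by linarith
  have key1 : 1 ≤ δ 1 ^ 2 * ((m:ℝ) - 1) := by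
    have h : (δ 1)⁻¹ ^ 2 ≤ (m:ℝ) - 1 := by linarith
    have h2 := mul_le_mul_of_nonneg_left h (sq_nonneg (δ 1))
    have h3 : δ 1 ^ 2 * (δ 1)⁻¹ ^ 2 = 1 := by field_simp
    linarith
  have key : 9*(m:ℝ) < δ 1 ^ 2 * (3*(m:ℝ) - 1)^2 := by
    nlinarith [key1, hm2R, sq_nonneg (3*(m:ℝ) - 1), sq_nonneg (δ 1)]
  have d3m2 : 2 ≤ 3*m := by omega
  have d3mpos : 0 < δ (3*m) := sp_pos hδ d3m2
  have d3mub : δ (3*m) ≤ 3*(m:ℝ) := by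
    have := sp_ub hδ (by omega : 1 ≤ 3*m); push_cast at this; linarith
  have d3pos : 0 < δ 3 := sp_pos hδ (by omega)
  have d3ub : δ 3 ≤ 3 := by
    have := sp_ub hδ (by omega : 1 ≤ 3); push_cast at this; linarith
  set tstar : ℝ := δ 3 / (δ 1 * (3*(m:ℝ) - 1)) with htstar
  set T0 : ℝ := δ 1 * (3*(m:ℝ) - 1) / δ (3*m) with hT0
  have htT : tstar < T0 := by
    rw [htstar, hT0, div_lt_div_iff₀ (by positivity) d3mpos]
    nlinarith [d3ub, d3mub, sp_nonneg hδ 3, sp_nonneg hδ (3*m), key]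
  have htspos : 0 < tstar := by rw [htstar]; positivity
  set ρ : ℝ := (tstar + T0)/2 with hρdef
  have hρt : tstar < ρ := by rw [hρdef]; linarith
  have hρT : ρ < T0 := by rw [hρdef]; linarith
  have hρpos : 0 < ρ := by linarith
  have hρ0 : ρ ≠ 0 := ne_of_gt hρpos
  have hminv : (m:ℝ)⁻¹ ≤ 2⁻¹ := by
    apply inv_anti₀ (by norm_num) hm2R
  have emA : MType.m ≠ MType.f := by decide
  have hPpos : ∀ i t, 0 < stA_P m i t := by
    intro i t
    by_cases hi : i = 0
    · cases t
      · simp only [stA_P, if_pos hi, if_pos rfl]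
        norm_num
      · simp only [stA_P, if_pos hi, if_neg emA]
        linarith
    · cases t
      · simp only [stA_P, if_neg hi, if_pos rfl, if_true]
        linarith
      · simp only [stA_P, if_neg hi, if_neg emA]
        positivity
  have hP00f : stA_P m 0 MType.f = 1 := by simp [stA_P]
  have hP00m : stA_P m 0 MType.m = 3*(m:ℝ) - 1 := by simp [stA_P]
  have hPsf : ∀ i : Fin (m+1), i ≠ 0 → stA_P m i MType.f = 3 - (m:ℝ)⁻¹ := by
    intro i hi; simp [stA_P, hi]
  have hPsm : ∀ i : Fin (m+1), i ≠ 0 → stA_P m i MType.m = (m:ℝ)⁻¹ := by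
    intro i hi; simp [stA_P, hi]
  have hJ0 : stA_J m 0 = 3*m := by simp [stA_J]
  have hJs : ∀ i : Fin (m+1), i ≠ 0 → stA_J m i = 3 := by intro i hi; simp [stA_J, hi]
  have hx0f : stA_x m 0 MType.f = 0 := by simp [stA_x]
  have hx0m : stA_x m 0 MType.m = 3*m := by simp [stA_x]
  have hxsf : ∀ i : Fin (m+1), i ≠ 0 → stA_x m i MType.f = 3 := by intro i hi; simp [stA_x, hi]
  have hxsm : ∀ i : Fin (m+1), i ≠ 0 → stA_x m i MType.m = 0 := by intro i hi; simp [stA_x, hi]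
  refine ⟨m+1, stA_P m, stA_J m, fun _ => 3*m, stA_P m, stA_x m,
    Nat.succ_pos m, hPpos, ?_, rfl, ?_, ?_, ?_⟩
  · -- row sums total
    rw [Fin.sum_univ_succ, hJ0]
    have h3 : ∀ i : Fin m, stA_J m i.succ = 3 := fun i => hJs i.succ (Fin.succ_ne_zero i)
    rw [Finset.sum_congr rfl (fun i _ => h3 i), Finset.sum_const, Finset.card_univ,
      Fintype.card_fin, smul_eq_mul]
    dsimp only
    omega
  · -- IsFairShare
    refine ⟨fun _ => 1, fun _ => 1, fun _ => one_pos, fun _ => one_pos, hPpos,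
      fun i t => by ring, ?_, ?_⟩
    · intro i
      by_cases hi : i = 0
      · rw [hi, hP00f, hP00m, hJ0]; push_cast; ring
      · rw [hPsf i hi, hPsm i hi, hJs i hi]; push_cast; ring
    · intro t
      rw [Fin.sum_univ_succ]
      dsimp only
      cases t
      · rw [hP00f, Finset.sum_congr rfl (fun i _ => hPsf i.succ (Fin.succ_ne_zero i)),
          Finset.sum_const, Finset.card_univ, Fintype.card_fin, nsmul_eq_mul]
        push_cast
        field_simp
        try ring
      · rw [hP00m, Finset.sum_congr rfl (fun i _ => hPsm i.succ (Fin.succ_ne_zero i)),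
          Finset.sum_const, Finset.card_univ, Fintype.card_fin, nsmul_eq_mul]
        push_cast
        field_simp
        try ring
  · -- singleton
    apply Set.eq_singleton_iff_unique_mem.mpr
    constructor
    · -- membership
      refine ⟨fun i => if i = 0 then δ (3*m) / (3*(m:ℝ) - 1) else (m:ℝ) * δ 3 / ((3*(m:ℝ) - 1) * ρ),
              fun t => if t = MType.f then ρ else 1, ?_, ?_, ?_, ?_, ?_⟩
      · intro i; dsimp only; split
        · exact div_pos d3mpos h3m1
        · exact div_pos (mul_pos hmpos d3pos) (mul_pos h3m1 hρpos)
      · intro t; dsimp only; split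
        · exact hρpos
        · exact one_pos
      · intro i t
        dsimp only
        have hmf : (if MType.f = MType.f then ρ else 1) = ρ := if_pos rfl
        have hmm : (if MType.m = MType.f then ρ else 1) = 1 := if_neg emA
        by_cases hi : i = 0
        · rw [if_pos hi, hi]
          cases t
          · rw [hx0f, hP00f, hmf]
            have hv : 1 * (δ (3*m) / (3*(m:ℝ) - 1)) * ρ < δ 1 := by
              have heq2 : δ (3*m) / (3*(m:ℝ) - 1) * T0 = δ 1 := by
                rw [hT0]; field_simp
              have hco : 0 < δ (3*m) / (3*(m:ℝ) - 1) := div_pos d3mpos h3m1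
              nlinarith [hρT, hco, heq2]
            apply mem_roundSet_interior
            · rw [hδ.1]
              exact mul_pos (mul_pos one_pos (div_pos d3mpos h3m1)) hρpos
            · simpa using hv
          · rw [hx0m, hP00m, hmm]
            have heq2 : (3*(m:ℝ) - 1) * (δ (3*m) / (3*(m:ℝ) - 1)) * 1 = δ (3*m) := by
              field_simp
            rw [heq2]
            exact mem_roundSet_left d3mpos rfl
        · rw [if_neg hi]
          cases t
          · rw [hxsf i hi, hPsf i hi, hmf]
            have heq2 : (3 - (m:ℝ)⁻¹) * ((m:ℝ) * δ 3 / ((3*(m:ℝ) - 1) * ρ)) * ρ = δ 3 := by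
              field_simp
            rw [heq2]
            exact mem_roundSet_left d3pos rfl
          · rw [hxsm i hi, hPsm i hi, hmm]
            have heq2 : (m:ℝ)⁻¹ * ((m:ℝ) * δ 3 / ((3*(m:ℝ) - 1) * ρ)) * 1
                = δ 3 / ((3*(m:ℝ) - 1) * ρ) := by
              rw [mul_one]
              rw [eq_div_iff (ne_of_gt (mul_pos h3m1 hρpos))]
              field_simp
              exact div_self (ne_of_gt (by linarith))
            rw [heq2]
            apply mem_roundSet_interior
            · rw [hδ.1]
              exact div_pos d3pos (mul_pos h3m1 hρpos)
            · have h1 : δ 3 < ρ * (δ 1 * (3*(m:ℝ) - 1)) := by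
                have := (div_lt_iff₀ (by positivity : (0:ℝ) < δ 1 * (3*(m:ℝ) - 1))).mp hρt
                linarith
              have h2 : δ 3 / ((3*(m:ℝ) - 1) * ρ) < δ 1 := by
                rw [div_lt_iff₀ (mul_pos h3m1 hρpos)]
                nlinarith [h1]
              simpa using h2
      · intro i
        by_cases hi : i = 0
        · rw [hi, hx0f, hx0m, hJ0]; omega
        · rw [hxsf i hi, hxsm i hi, hJs i hi]
      · intro t
        cases t
        · rw [Fin.sum_univ_succ, hx0f,
            Finset.sum_congr rfl (fun i _ => hxsf i.succ (Fin.succ_ne_zero i)),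
            Finset.sum_const, Finset.card_univ, Fintype.card_fin, smul_eq_mul]
          dsimp only
          omega
        · rw [Fin.sum_univ_succ, hx0m,
            Finset.sum_congr rfl (fun i _ => hxsm i.succ (Fin.succ_ne_zero i)),
            Finset.sum_const, Finset.card_univ, Fintype.card_fin, smul_eq_mul]
          dsimp only
          omega
    · -- uniqueness
      rintro y ⟨lam, mu, hlam, hmu, hmem, hrow, hcol⟩
      have hyb : ∀ i t, δ (y i t) ≤ stA_P m i t * lam i * mu t ∧
          stA_P m i t * lam i * mu t ≤ δ (y i t + 1) := fun i t =>
        roundSet_bounds hδ (mul_pos (mul_pos (hPpos i t) (hlam i)) (hmu t)) (hmem i t)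
      have hrow0 : y 0 MType.f + y 0 MType.m = 3*m := by
        have := hrow 0; rwa [hJ0] at this
      have hrows : ∀ i : Fin m, y i.succ MType.f + y i.succ MType.m = 3 := fun i => by
        have := hrow i.succ; rwa [hJs i.succ (Fin.succ_ne_zero i)] at this
      have hcolf : y 0 MType.f + ∑ i : Fin m, y i.succ MType.f = 3*m := by
        have := hcol MType.f; rwa [Fin.sum_univ_succ] at this
      have hhle : ∀ i : Fin m, y i.succ MType.f ≤ 3 := fun i => by have := hrows i; omega
      by_cases h0 : y 0 MType.f = 0
      · have hsum : ∑ i : Fin m, y i.succ MType.f = 3*m := by omega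
        have hall : ∀ i : Fin m, y i.succ MType.f = 3 := by
          intro i0
          by_contra hne
          have hlt := Finset.sum_lt_sum (fun (i : Fin m) (_ : i ∈ univ) => hhle i)
            ⟨i0, Finset.mem_univ _, lt_of_le_of_ne (hhle i0) hne⟩
          rw [hsum, Finset.sum_const, Finset.card_univ, Fintype.card_fin, smul_eq_mul] at hlt
          omega
        funext i t
        rcases Fin.eq_zero_or_eq_succ i with rfl | ⟨j, rfl⟩
        · cases t
          · rw [hx0f, h0]
          · rw [hx0m]; omega
        · have h3 := hall j
          cases t
          · rw [hxsf j.succ (Fin.succ_ne_zero j), h3]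
          · rw [hxsm j.succ (Fin.succ_ne_zero j)]
            have := hrows j; omega
      · exfalso
        have h01 : 1 ≤ y 0 MType.f := by omega
        have hex : ∃ j : Fin m, y j.succ MType.f ≤ 2 := by
          by_contra hno
          push_neg at hno
          have hge : (∑ _i : Fin m, 3) ≤ ∑ i : Fin m, y i.succ MType.f :=
            Finset.sum_le_sum fun i _ => hno i
          rw [Finset.sum_const, Finset.card_univ, Fintype.card_fin, smul_eq_mul] at hge
          omega
        obtain ⟨j, hj⟩ := hex
        have hjm : 1 ≤ y j.succ MType.m := by have := hrows j; omega
        have hA := (hyb 0 MType.f).1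
        have hB := (hyb 0 MType.m).2
        have hC := (hyb j.succ MType.f).2
        have hD := (hyb j.succ MType.m).1
        rw [hP00f] at hA
        rw [hP00m] at hB
        rw [hPsf j.succ (Fin.succ_ne_zero j)] at hC
        rw [hPsm j.succ (Fin.succ_ne_zero j)] at hD
        have hA2 : δ 1 ≤ δ (y 0 MType.f) := sp_mono hδ h01
        have hB2 : δ (y 0 MType.m + 1) ≤ δ (3*m) := sp_mono hδ (by omega)
        have hC2 : δ (y j.succ MType.f + 1) ≤ δ 3 := sp_mono hδ (by omega)
        have hD2 : δ 1 ≤ δ (y j.succ MType.m) := sp_mono hδ hjm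
        have hA' : δ 1 ≤ lam 0 * mu MType.f := by nlinarith [hA, hA2]
        have hB' : (3*(m:ℝ) - 1) * (lam 0 * mu MType.m) ≤ 3*(m:ℝ) := by
          nlinarith [hB, hB2, d3mub]
        have hC' : (3*(m:ℝ) - 1) * (lam j.succ * mu MType.f) ≤ (m:ℝ) * δ 3 := by
          have h := mul_le_mul_of_nonneg_left (le_trans hC hC2) (le_of_lt hmpos)
          have e : (m:ℝ) * ((3 - (m:ℝ)⁻¹) * lam j.succ * mu MType.f)
              = (3*(m:ℝ) - 1) * (lam j.succ * mu MType.f) := by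
            field_simp
          linarith [e ▸ h]
        have hD' : (m:ℝ) * δ 1 ≤ lam j.succ * mu MType.m := by
          have h := mul_le_mul_of_nonneg_left (le_trans hD2 hD) (le_of_lt hmpos)
          have e : (m:ℝ) * ((m:ℝ)⁻¹ * lam j.succ * mu MType.m)
              = lam j.succ * mu MType.m := by field_simp
          linarith [e ▸ h]
        have hAD : δ 1 * ((m:ℝ) * δ 1) ≤ (lam 0 * mu MType.f) * (lam j.succ * mu MType.m) :=
          mul_le_mul hA' hD' (by positivity)
            (le_of_lt (mul_pos (hlam 0) (hmu MType.f)))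
        have hBC : ((3*(m:ℝ) - 1) * (lam 0 * mu MType.m)) * ((3*(m:ℝ) - 1) * (lam j.succ * mu MType.f))
            ≤ (3*(m:ℝ)) * ((m:ℝ) * δ 3) :=
          mul_le_mul hB' hC'
            (le_of_lt (mul_pos h3m1 (mul_pos (hlam j.succ) (hmu MType.f))))
            (by positivity)
        have heq : (lam 0 * mu MType.f) * (lam j.succ * mu MType.m) * (3*(m:ℝ) - 1)^2
            = ((3*(m:ℝ) - 1) * (lam 0 * mu MType.m)) * ((3*(m:ℝ) - 1) * (lam j.succ * mu MType.f)) := by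
          have : (lam 0 * mu MType.f) * (lam j.succ * mu MType.m)
              = (lam 0 * mu MType.m) * (lam j.succ * mu MType.f) := by ring
          linear_combination (3*(m:ℝ) - 1)^2 * this
        have hstep := mul_le_mul_of_nonneg_right hAD (sq_nonneg (3*(m:ℝ) - 1))
        have hfin2 : (3*(m:ℝ)) * ((m:ℝ) * δ 3) ≤ 9*(m:ℝ)^2 := by nlinarith [d3ub, hmpos]
        have hfin3 : 9*(m:ℝ)^2 < δ 1 * ((m:ℝ) * δ 1) * (3*(m:ℝ) - 1)^2 := by
          nlinarith [key, hmpos]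
        nlinarith [hstep, heq, hBC, hfin2, hfin3]
  · -- fraction bound
    have hmem0 : (0 : Fin (m+1)) ∈ (univ.filter fun i : Fin (m+1) =>
        ∃ t : MType, ¬(⌊stA_P m i t⌋ ≤ (stA_x m i t : ℤ) ∧ (stA_x m i t : ℤ) ≤ ⌈stA_P m i t⌉)) := by
      refine Finset.mem_filter.mpr ⟨Finset.mem_univ _, ⟨MType.f, ?_⟩⟩
      rw [hP00f, hx0f]
      norm_num
    have hcard : (1:ℝ) ≤ ((univ.filter fun i : Fin (m+1) =>
        ∃ t : MType, ¬(⌊stA_P m i t⌋ ≤ (stA_x m i t : ℤ) ∧ (stA_x m i t : ℤ) ≤ ⌈stA_P m i t⌉)).card : ℝ) := by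
      have := Finset.card_pos.mpr ⟨0, hmem0⟩
      exact_mod_cast this
    have hcast : (1 + (⌈(δ 1)⁻¹ ^ 2 + 1⌉₊ : ℝ)) = ((m+1 : ℕ) : ℝ) := by
      rw [← hmdef]; push_cast; ring
    rw [hcast]
    exact div_le_div_of_nonneg_right hcard (by positivity)

/-- Data for part (b). -/
noncomputable def stB_P : Fin 3 → MType → ℝ := fun i t =>
  if i = 0 then (if t = MType.f then 1 else 5) else (if t = MType.f then 5/2 else 1/2)

def stB_J : Fin 3 → ℕ := fun i => if i = 0 then 6 else 3

def stB_x : Fin 3 → MType → ℕ := fun i t =>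
  if i = 0 then (if t = MType.f then 2 else 4) else (if t = MType.f then 2 else 1)

set_option maxHeartbeats 2000000 in
lemma stmt18_partB (δ : ℕ → ℝ) (hδ : Signpost δ) (h10 : δ 1 = 0) :
      ∃ (P : Fin 3 → MType → ℝ) (J : Fin 3 → ℕ) (φ : MType → ℕ)
        (F : Fin 3 → MType → ℝ) (x : Fin 3 → MType → ℕ),
        (∀ i t, 0 < P i t) ∧ ((∑ i, J i) = φ MType.f + φ MType.m) ∧
        φ MType.f = φ MType.m ∧ IsFairShare P J φ F ∧
        bipropSetNS δ P J φ = {x} ∧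
        (1 : ℝ) / 3 ≤
          ((univ.filter fun i : Fin 3 =>
              ∃ t : MType, ¬(⌊F i t⌋ ≤ (x i t : ℤ) ∧ (x i t : ℤ) ≤ ⌈F i t⌉)).card : ℝ) / 3 := by
  have e1 : (1 : Fin 3) ≠ 0 := by decide
  have e2 : (2 : Fin 3) ≠ 0 := by decide
  have em : MType.m ≠ MType.f := by decide
  have d2lb : (1:ℝ) ≤ δ 2 := by have := sp_lb hδ (by omega : 1 ≤ 2); push_cast at this; linarith
  have d2ub : δ 2 ≤ 2 := by have := sp_ub hδ (by omega : 1 ≤ 2); push_cast at this; linarith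
  have d3lb : (2:ℝ) ≤ δ 3 := by have := sp_lb hδ (by omega : 1 ≤ 3); push_cast at this; linarith
  have d4lb : (3:ℝ) ≤ δ 4 := by have := sp_lb hδ (by omega : 1 ≤ 4); push_cast at this; linarith
  have d4ub : δ 4 ≤ 4 := by have := sp_ub hδ (by omega : 1 ≤ 4); push_cast at this; linarith
  have d2pos : 0 < δ 2 := by linarith
  have d4pos : 0 < δ 4 := by linarith
  have d4ne : δ 4 ≠ 0 := ne_of_gt d4pos
  have hPpos : ∀ i t, 0 < stB_P i t := by
    intro i t
    fin_cases i <;> cases t <;> simp [stB_P, Fin.ext_iff] <;> norm_num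
  have hP0f : stB_P 0 MType.f = 1 := by simp [stB_P]
  have hP0m : stB_P 0 MType.m = 5 := by simp [stB_P]
  have hPsf : ∀ j : Fin 3, j ≠ 0 → stB_P j MType.f = 5/2 := by
    intro j hj; simp [stB_P, hj]
  have hPsm : ∀ j : Fin 3, j ≠ 0 → stB_P j MType.m = 1/2 := by
    intro j hj; simp [stB_P, hj]
  refine ⟨stB_P, stB_J, fun _ => 6, stB_P, stB_x, hPpos, ?_, rfl, ?_, ?_, ?_⟩
  · rw [Fin.sum_univ_three]; norm_num [stB_J, e1, e2, em]
  · -- IsFairShare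
    refine ⟨fun _ => 1, fun _ => 1, fun _ => one_pos, fun _ => one_pos, hPpos,
      fun i t => by ring, ?_, ?_⟩
    · intro i
      rcases (by omega : i = 0 ∨ i = 1 ∨ i = 2) with rfl | rfl | rfl <;>
        norm_num [stB_P, stB_J, e1, e2, em]
    · intro t; rw [Fin.sum_univ_three]; cases t <;> norm_num [stB_P, e1, e2, em]
  · -- biprop set is a singleton
    apply Set.eq_singleton_iff_unique_mem.mpr
    constructor
    · -- membership
      refine ⟨fun i => if i = 0 then δ 4/5 else 2*δ 4/25,
              fun t => if t = MType.f then 5*δ 2/δ 4 else 1, ?_, ?_, ?_, ?_, ?_⟩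
      · intro i; dsimp only; split <;> positivity
      · intro t; cases t <;> simp <;> positivity
      · intro i t
        rcases (by omega : i = 0 ∨ i = 1 ∨ i = 2) with rfl | rfl | rfl <;> cases t <;>
          simp only [stB_P, stB_x, e1, e2, em, if_true, if_false, reduceIte]
        · rw [show (1:ℝ) * (δ 4/5) * (5*δ 2/δ 4) = δ 2 by field_simp]
          exact mem_roundSet_left d2pos rfl
        · rw [show (5:ℝ) * (δ 4/5) * 1 = δ 4 by field_simp]
          exact mem_roundSet_left d4pos rfl
        · rw [show (5/2:ℝ) * (2*δ 4/25) * (5*δ 2/δ 4) = δ 2 by field_simp; ring]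
          exact mem_roundSet_left d2pos rfl
        · rw [show (1/2:ℝ) * (2*δ 4/25) * 1 = δ 4/25 by ring]
          apply mem_roundSet_interior
          · rw [h10]; positivity
          · show δ 4 / 25 < δ 2
            linarith
        · rw [show (5/2:ℝ) * (2*δ 4/25) * (5*δ 2/δ 4) = δ 2 by field_simp; ring]
          exact mem_roundSet_left d2pos rfl
        · rw [show (1/2:ℝ) * (2*δ 4/25) * 1 = δ 4/25 by ring]
          apply mem_roundSet_interior
          · rw [h10]; positivity
          · show δ 4 / 25 < δ 2
            linarith
      · intro i
        rcases (by omega : i = 0 ∨ i = 1 ∨ i = 2) with rfl | rfl | rfl <;>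
          norm_num [stB_x, stB_J, e1, e2, em]
      · intro t; rw [Fin.sum_univ_three]; cases t <;> norm_num [stB_x, e1, e2, em]
    · -- uniqueness
      rintro y ⟨lam, mu, hlam, hmu, hmem, hrow, hcol⟩
      have hyge1 : ∀ i t, 1 ≤ y i t := by
        intro i t
        by_contra hlt
        have h0 : y i t = 0 := by omega
        have hpos : 0 < stB_P i t * lam i * mu t :=
          mul_pos (mul_pos (hPpos i t) (hlam i)) (hmu t)
        have hb := (roundSet_bounds hδ hpos (h0 ▸ hmem i t)).2
        rw [h10] at hb
        linarith
      have hr0 : y 0 MType.f + y 0 MType.m = 6 := by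
        have := hrow 0; simpa [stB_J] using this
      have hr1 : y 1 MType.f + y 1 MType.m = 3 := by
        have := hrow 1; simpa [stB_J, e1] using this
      have hr2 : y 2 MType.f + y 2 MType.m = 3 := by
        have := hrow 2; simpa [stB_J, e2] using this
      have hcf : y 0 MType.f + y 1 MType.f + y 2 MType.f = 6 := by
        have := hcol MType.f; rwa [Fin.sum_univ_three] at this
      have h1le : y 1 MType.f ≤ 2 := by have := hyge1 1 MType.m; omega
      have h2le : y 2 MType.f ≤ 2 := by have := hyge1 2 MType.m; omega
      have key : ∀ j : Fin 3, j ≠ 0 → 3 ≤ y 0 MType.f → y j MType.f = 1 → False := by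
        intro j hj h03 hj1
        have hjm : y j MType.m = 2 := by
          have h := hrow j
          simp only [stB_J, if_neg hj] at h
          omega
        have hpos0f : 0 < stB_P 0 MType.f * lam 0 * mu MType.f :=
          mul_pos (mul_pos (hPpos _ _) (hlam _)) (hmu _)
        have hpos0m : 0 < stB_P 0 MType.m * lam 0 * mu MType.m :=
          mul_pos (mul_pos (hPpos _ _) (hlam _)) (hmu _)
        have hposjf : 0 < stB_P j MType.f * lam j * mu MType.f :=
          mul_pos (mul_pos (hPpos _ _) (hlam _)) (hmu _)
        have hposjm : 0 < stB_P j MType.m * lam j * mu MType.m :=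
          mul_pos (mul_pos (hPpos _ _) (hlam _)) (hmu _)
        have hA := (roundSet_bounds hδ hpos0f (hmem 0 MType.f)).1
        have hB := (roundSet_bounds hδ hpos0m (hmem 0 MType.m)).2
        have hC := (roundSet_bounds hδ hposjf (hmem j MType.f)).2
        have hD := (roundSet_bounds hδ hposjm (hmem j MType.m)).1
        rw [hj1] at hC
        rw [hjm] at hD
        rw [hP0f] at hA; rw [hP0m] at hB; rw [hPsf j hj] at hC; rw [hPsm j hj] at hD
        have hA' : (2:ℝ) ≤ lam 0 * mu MType.f := by
          have hm : δ 3 ≤ δ (y 0 MType.f) := sp_mono hδ h03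
          nlinarith [hA]
        have hy0m : y 0 MType.m + 1 ≤ 4 := by omega
        have hB' : lam 0 * mu MType.m ≤ 4/5 := by
          have hm : δ (y 0 MType.m + 1) ≤ δ 4 := sp_mono hδ hy0m
          nlinarith [hB]
        have hC' : lam j * mu MType.f ≤ 4/5 := by
          nlinarith [hC]
        have hD' : (2:ℝ) ≤ lam j * mu MType.m := by
          nlinarith [hD]
        have heq : (lam 0 * mu MType.f) * (lam j * mu MType.m)
            = (lam 0 * mu MType.m) * (lam j * mu MType.f) := by ring
        nlinarith [mul_le_mul hB' hC' (le_of_lt (mul_pos (hlam j) (hmu MType.f))) (by norm_num : (0:ℝ) ≤ 4/5),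
          mul_le_mul hA' hD' (by norm_num) (le_of_lt (mul_pos (hlam 0) (hmu MType.f))), heq]
      have hy0 : y 0 MType.f = 2 := by
        by_contra hne
        have h03 : 3 ≤ y 0 MType.f := by
          have := hyge1 0 MType.f
          have := hyge1 1 MType.f
          have := hyge1 2 MType.f
          omega
        have halt : y 1 MType.f = 1 ∨ y 2 MType.f = 1 := by
          have := hyge1 1 MType.f; have := hyge1 2 MType.f; omega
        rcases halt with h | h
        · exact key 1 e1 h03 h
        · exact key 2 e2 h03 h
      funext i t
      have hy1 : y 1 MType.f = 2 := by omega
      have hy2 : y 2 MType.f = 2 := by omega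
      rcases (by omega : i = 0 ∨ i = 1 ∨ i = 2) with rfl | rfl | rfl <;> cases t <;>
        simp only [stB_x, e1, e2, em, if_true, if_false, reduceIte] <;> omega
  · -- fraction bound
    have hmem0 : (0 : Fin 3) ∈ (univ.filter fun i : Fin 3 =>
        ∃ t : MType, ¬(⌊stB_P i t⌋ ≤ (stB_x i t : ℤ) ∧ (stB_x i t : ℤ) ≤ ⌈stB_P i t⌉)) := by
      refine Finset.mem_filter.mpr ⟨Finset.mem_univ _, ⟨MType.f, ?_⟩⟩
      rw [hP0f]
      norm_num [stB_x]
    have hcard : 1 ≤ ((univ.filter fun i : Fin 3 =>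
        ∃ t : MType, ¬(⌊stB_P i t⌋ ≤ (stB_x i t : ℤ) ∧ (stB_x i t : ℤ) ≤ ⌈stB_P i t⌉)).card : ℝ) := by
      have := Finset.card_pos.mpr ⟨0, hmem0⟩
      exact_mod_cast this
    have h3 : (0:ℝ) < 3 := by norm_num
    exact div_le_div_of_nonneg_right hcard (by norm_num)
end Stmt18Aux

/-- lower bounds on the fraction of rows in which the unique
`δ`-biproportional solution violates the rounded fair share. -/
theorem stmt18 (δ : ℕ → ℝ) (hδ : Signpost δ) :
    (0 < δ 1 →
      ∃ (n : ℕ) (P : Fin n → MType → ℝ) (J : Fin n → ℕ) (φ : MType → ℕ)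
        (F : Fin n → MType → ℝ) (x : Fin n → MType → ℕ),
        0 < n ∧ (∀ i t, 0 < P i t) ∧ ((∑ i, J i) = φ MType.f + φ MType.m) ∧
        φ MType.f = φ MType.m ∧ IsFairShare P J φ F ∧
        bipropSetNS δ P J φ = {x} ∧
        (1 : ℝ) / (1 + (⌈(δ 1)⁻¹ ^ 2 + 1⌉₊ : ℝ)) ≤
          ((univ.filter fun i : Fin n =>
              ∃ t : MType, ¬(⌊F i t⌋ ≤ (x i t : ℤ) ∧ (x i t : ℤ) ≤ ⌈F i t⌉)).card : ℝ) / n) ∧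
    (δ 1 = 0 →
      ∃ (P : Fin 3 → MType → ℝ) (J : Fin 3 → ℕ) (φ : MType → ℕ)
        (F : Fin 3 → MType → ℝ) (x : Fin 3 → MType → ℕ),
        (∀ i t, 0 < P i t) ∧ ((∑ i, J i) = φ MType.f + φ MType.m) ∧
        φ MType.f = φ MType.m ∧ IsFairShare P J φ F ∧
        bipropSetNS δ P J φ = {x} ∧
        (1 : ℝ) / 3 ≤
          ((univ.filter fun i : Fin 3 =>
              ∃ t : MType, ¬(⌊F i t⌋ ≤ (x i t : ℤ) ∧ (x i t : ℤ) ≤ ⌈F i t⌉)).card : ℝ) / 3) := by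
  exact ⟨stmt18_partA δ hδ, stmt18_partB δ hδ⟩
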